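/- Fix C_3 > 0 and let h: [-1,1] -> R be smooth with h(0)=h'(0)=h''(0)=0 and C_3/4 <= h''' <= C_3 on [-1,1]. Let C_0 be a sufficiently large dyadic constant (depending only on C_3), let 0 < epsilon <= 1, let rho > 0 be dyadic, and let delta > 0 be dyadic with delta <= epsilon^{-1} rho^{-2} (up to a fixed constant). Let I_1, I_2 be intervals of length rho with left endpoints j_1 rho and j_2 rho, where C_0/8 < |j_2-j_1| < C_0/2. Let x_1^0, t_2^0 in R, let y_1^0 in I_1, let y_2^0 be the left endpoint of I_2, set U_1 := {(x_1,y_1): 0 <= y_1 - y_1^0 < rho*min(1,delta), 0 <= x_1 - x_1^0 + epsilon*(h''(y_1^0)/2)(y_1-y_1^0) < epsilon rho^2 delta} and U_2 := {(x_2,y_2): 0 <= y_2 - y_2^0 < rho, 0 <= x_2 - t_2^0 + epsilon*[h'(y_2)-h'(y_1^0)-(h''(y_1^0)/2)(y_2-y_1^0)] < epsilon rho^2 delta}, and set z_1^0 = (x_1^0, y_1^0), z_2^0 = (x_2^0, y_2^0) with x_2^0 := t_2^0 - epsilon*[h'(y_2^0)-h'(y_1^0)-(h''(y_1^0)/2)(y_2^0-y_1^0)].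 Assume the admissibility conditions (C_0^2/4) epsilon rho^2 delta <= |t_2^0 - x_1^0| < 4 C_0^2 epsilon rho^2 delta and (C_0^2/512) epsilon rho^2 max(1,delta) <= |tau_{z_2^0}(z_1^0,z_2^0)| < 5 C_0^2 epsilon rho^2 max(1,delta). Then for all (z_1, z_2) in U_1 x U_2 one has (1/8) C_0^2 epsilon rho^2 delta <= |tau_{z_1}(z_1,z_2)| <= 8 C_0^2 epsilon rho^2 delta and (1/1000) C_0^2 epsilon rho^2 max(1,delta) <= |tau_{z_2}(z_1,z_2)| <= 1000 C_0^2 epsilon rho^2 max(1,delta). -/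
import Mathlib


open MeasureTheory Set
open scoped ENNReal

noncomputable section


lemma lipH {C3 : ℝ} (hC3 : 0 < C3) {h : ℝ → ℝ} (hh : ContDiff ℝ (⊤ : ℕ∞) h)
    (h3 : ∀ y ∈ Set.Icc (-1 : ℝ) 1,
      C3 / 4 ≤ iteratedDeriv 3 h y ∧ iteratedDeriv 3 h y ≤ C3) :
    ∀ a ∈ Set.Icc (-1:ℝ) 1, ∀ b ∈ Set.Icc (-1:ℝ) 1,
      |iteratedDeriv 2 h b - iteratedDeriv 2 h a| ≤ C3 * |b - a| := by
  intro a ha b hb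
  have hdiff : Differentiable ℝ (iteratedDeriv 2 h) :=
    hh.differentiable_iteratedDeriv 2 (ENat.natCast_lt_of_coe_top_le_withTop le_rfl 2)
  have key := Convex.norm_image_sub_le_of_norm_deriv_le (f := iteratedDeriv 2 h)
      (s := Set.Icc (-1:ℝ) 1) (C := C3) (fun x _ => hdiff x) ?_ (convex_Icc _ _) ha hb
  · simpa [Real.norm_eq_abs] using key
  · intro x hx
    have : deriv (iteratedDeriv 2 h) x = iteratedDeriv 3 h x :=
      congrFun (iteratedDeriv_succ (n := 2)).symm x
    rw [Real.norm_eq_abs, this, abs_le]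
    have := h3 x hx
    constructor <;> linarith [this.1, this.2]

lemma taylorH {C3 : ℝ} (hC3 : 0 < C3) {h : ℝ → ℝ} (hh : ContDiff ℝ (⊤ : ℕ∞) h)
    (h3 : ∀ y ∈ Set.Icc (-1 : ℝ) 1,
      C3 / 4 ≤ iteratedDeriv 3 h y ∧ iteratedDeriv 3 h y ≤ C3) :
    ∀ a ∈ Set.Icc (-1:ℝ) 1, ∀ b ∈ Set.Icc (-1:ℝ) 1,
      |deriv h b - deriv h a - iteratedDeriv 2 h a * (b - a)| ≤ C3 * (b - a)^2 := by
  intro a ha b hb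
  have hdiff1 : Differentiable ℝ (deriv h) := by
    have := hh.differentiable_iteratedDeriv 1 (ENat.natCast_lt_of_coe_top_le_withTop le_rfl 1)
    rwa [iteratedDeriv_one] at this
  have hd2 : ∀ x, HasDerivAt (deriv h) (iteratedDeriv 2 h x) x := by
    intro x
    have : iteratedDeriv 2 h x = deriv (deriv h) x := by
      rw [iteratedDeriv_succ (n := 1), iteratedDeriv_one]
    rw [this]
    exact (hdiff1 x).hasDerivAt
  have hsub : Set.uIcc a b ⊆ Set.Icc (-1:ℝ) 1 := by
    intro t ht
    rcases Set.mem_uIcc.1 ht with ⟨h1, h2⟩ | ⟨h1, h2⟩ <;>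
      exact ⟨by linarith [ha.1, hb.1], by linarith [ha.2, hb.2]⟩
  have habs : ∀ t ∈ Set.uIcc a b, |t - a| ≤ |b - a| := by
    intro t ht
    rcases Set.mem_uIcc.1 ht with ⟨h1, h2⟩ | ⟨h1, h2⟩
    · rw [abs_of_nonneg (by linarith), abs_of_nonneg (by linarith)]; linarith
    · rw [abs_of_nonpos (by linarith), abs_of_nonpos (by linarith)]; linarith
  have key := Convex.norm_image_sub_le_of_norm_hasDerivWithin_le
      (f := fun t => deriv h t - iteratedDeriv 2 h a * t)
      (f' := fun t => iteratedDeriv 2 h t - iteratedDeriv 2 h a)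
      (s := Set.uIcc a b) (C := C3 * |b - a|)
      (fun x hx => (((hd2 x).sub ((hasDerivAt_id x).const_mul _)).hasDerivWithinAt).congr_deriv
        (by ring))
      (fun x hx => by
        have := lipH hC3 hh h3 a ha x (hsub hx)
        have h2 := habs x hx
        rw [Real.norm_eq_abs]
        calc |iteratedDeriv 2 h x - iteratedDeriv 2 h a| ≤ C3 * |x - a| := this
          _ ≤ C3 * |b - a| := by nlinarith
        )
      (convex_uIcc a b) Set.left_mem_uIcc Set.right_mem_uIcc
  rw [Real.norm_eq_abs, Real.norm_eq_abs] at key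
  calc |deriv h b - deriv h a - iteratedDeriv 2 h a * (b - a)|
      = |(deriv h b - iteratedDeriv 2 h a * b) - (deriv h a - iteratedDeriv 2 h a * a)| := by
        ring_nf
    _ ≤ C3 * |b - a| * |b - a| := key
    _ = C3 * (b - a)^2 := by rw [mul_assoc, abs_mul_abs_self]; ring

set_option maxHeartbeats 1000000 in
/-- Lemma 3.2 (sizes of the transversalities on admissible pairs of type 1): for a
perturbation `h` of coarse cubic type, an admissible pair `(U₁, U₂)` of type 1 at dyadic
scales `δ, ρ` inside an admissible pair of strips (separation `C₀/8 < |j₂-j₁| < C₀/2`), one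
has `|τ_{z₁}(z₁,z₂)| ∼₈ C₀² ε ρ² δ` and `|τ_{z₂}(z₁,z₂)| ∼₁₀₀₀ C₀² ε ρ² (1 ∨ δ)` for all
`(z₁,z₂) ∈ U₁ × U₂`. -/
theorem statement8 (C3 : ℝ) (hC3 : 0 < C3) :
    ∃ K : ℝ, 1 ≤ K ∧
      ∀ (k0 : ℕ) (C0 : ℝ), C0 = 2 ^ k0 → K ≤ C0 →
      ∀ h : ℝ → ℝ, ContDiff ℝ (⊤ : ℕ∞) h →
        h 0 = 0 → deriv h 0 = 0 → iteratedDeriv 2 h 0 = 0 →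
        (∀ y ∈ Set.Icc (-1 : ℝ) 1,
          C3 / 4 ≤ iteratedDeriv 3 h y ∧ iteratedDeriv 3 h y ≤ C3) →
      ∀ ε : ℝ, 0 < ε → ε ≤ 1 →
      ∀ (m n : ℤ) (ρ δ : ℝ), ρ = (2 : ℝ) ^ m → δ = (2 : ℝ) ^ n → δ ≤ (ε * ρ ^ 2)⁻¹ →
      ∀ j1 j2 : ℤ, C0 / 8 < |(j2 : ℝ) - (j1 : ℝ)| → |(j2 : ℝ) - (j1 : ℝ)| < C0 / 2 →
        Set.Ico ((j1 : ℝ) * ρ) ((j1 : ℝ) * ρ + ρ) ⊆ Set.Icc (-1 : ℝ) 1 →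
        Set.Ico ((j2 : ℝ) * ρ) ((j2 : ℝ) * ρ + ρ) ⊆ Set.Icc (-1 : ℝ) 1 →
      ∀ x10 t20 y10 : ℝ, y10 ∈ Set.Ico ((j1 : ℝ) * ρ) ((j1 : ℝ) * ρ + ρ) →
        y10 + ρ * min 1 δ ≤ (j1 : ℝ) * ρ + ρ →
      let y20 : ℝ := (j2 : ℝ) * ρ
      let x20 : ℝ := t20 -
        ε * (deriv h y20 - deriv h y10 - iteratedDeriv 2 h y10 / 2 * (y20 - y10))
      let τ : ℝ × ℝ → ℝ × ℝ → ℝ × ℝ → ℝ := fun z z1 z2 =>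
        z2.1 - z1.1 +
          ε * (deriv h z2.2 - deriv h z1.2 - 1 / 2 * iteratedDeriv 2 h z.2 * (z2.2 - z1.2))
      let U1 : Set (ℝ × ℝ) := {z | 0 ≤ z.2 - y10 ∧ z.2 - y10 < ρ * min 1 δ ∧
        0 ≤ z.1 - x10 + ε * (iteratedDeriv 2 h y10 / 2) * (z.2 - y10) ∧
        z.1 - x10 + ε * (iteratedDeriv 2 h y10 / 2) * (z.2 - y10) < ε * ρ ^ 2 * δ}
      let U2 : Set (ℝ × ℝ) := {z | 0 ≤ z.2 - y20 ∧ z.2 - y20 < ρ ∧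
        0 ≤ z.1 - t20 + ε * (deriv h z.2 - deriv h y10 -
          iteratedDeriv 2 h y10 / 2 * (z.2 - y10)) ∧
        z.1 - t20 + ε * (deriv h z.2 - deriv h y10 -
          iteratedDeriv 2 h y10 / 2 * (z.2 - y10)) < ε * ρ ^ 2 * δ}
      -- admissibility condition (3.14)
      C0 ^ 2 / 4 * (ε * ρ ^ 2 * δ) ≤ |t20 - x10| →
      |t20 - x10| < 4 * C0 ^ 2 * (ε * ρ ^ 2 * δ) →
      -- admissibility condition (3.15)
      C0 ^ 2 / 512 * (ε * ρ ^ 2 * max 1 δ) ≤ |τ (x20, y20) (x10, y10) (x20, y20)| →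
      |τ (x20, y20) (x10, y10) (x20, y20)| < 5 * C0 ^ 2 * (ε * ρ ^ 2 * max 1 δ) →
      -- conclusion
      ∀ z1 ∈ U1, ∀ z2 ∈ U2,
        (1 / 8 * (C0 ^ 2 * (ε * ρ ^ 2 * δ)) ≤ |τ z1 z1 z2| ∧
          |τ z1 z1 z2| ≤ 8 * (C0 ^ 2 * (ε * ρ ^ 2 * δ))) ∧
        (1 / 1000 * (C0 ^ 2 * (ε * ρ ^ 2 * max 1 δ)) ≤ |τ z2 z1 z2| ∧
          |τ z2 z1 z2| ≤ 1000 * (C0 ^ 2 * (ε * ρ ^ 2 * max 1 δ))) := by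
  refine ⟨8192 * (1 + C3), by nlinarith, ?_⟩
  intro k0 C0 hC0 hKC0 h hh h0 h1 h2 h3 ε hε hε1 m n ρ δ hρ hδ hδε j1 j2 hj1 hj2 hI1 hI2
  intro x10 t20 y10 hy10 hy10'
  intro y20 x20 τ U1 U2 h14a h14b h15a h15b z1 hz1 z2 hz2
  simp only [U1, U2, y20, Set.mem_setOf_eq] at hz1 hz2
  obtain ⟨hz1a, hz1b, hz1c, hz1d⟩ := hz1
  obtain ⟨hz2a, hz2b, hz2c, hz2d⟩ := hz2
  simp only [τ, x20, y20] at h15a h15b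
  -- basic positivity
  have hρ0 : 0 < ρ := by rw [hρ]; positivity
  have hδ0 : 0 < δ := by rw [hδ]; positivity
  have hC0K : 8192 * (1 + C3) ≤ C0 := hKC0
  have hC0pos : 0 < C0 := by linarith
  have hC02 : 2 ≤ C0 := by linarith
  have hM0 : 0 < min 1 δ := lt_min one_pos hδ0
  have hM1 : min 1 δ ≤ 1 := min_le_left _ _
  have hMδ : min 1 δ ≤ δ := min_le_right _ _
  have hMx1 : 1 ≤ max 1 δ := le_max_left _ _
  have hMxδ : δ ≤ max 1 δ := le_max_right _ _
  have hX0 : 0 < ε * ρ ^ 2 * δ := by positivity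
  have hY0 : 0 < ε * ρ ^ 2 * max 1 δ := by
    have : (0:ℝ) < max 1 δ := by linarith
    positivity
  have hXY : ε * ρ ^ 2 * δ ≤ ε * ρ ^ 2 * max 1 δ :=
    mul_le_mul_of_nonneg_left hMxδ (by positivity)
  have hρ2Y : ε * ρ ^ 2 ≤ ε * ρ ^ 2 * max 1 δ := by
    have := mul_le_mul_of_nonneg_left hMx1 (show (0:ℝ) ≤ ε * ρ ^ 2 by positivity)
    linarith
  -- key nonlinear constants facts
  have q1 : 8192 * (1 + C3) * C0 ≤ C0 * C0 := mul_le_mul_of_nonneg_right hC0K hC0pos.le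
  have q2 : 2 * C3 ≤ C3 * C0 := by
    have := mul_nonneg hC3.le (show (0:ℝ) ≤ C0 - 2 by linarith)
    linarith [this]
  have c8 : 1 + C3 + C3 * C0 / 2 ≤ C0 ^ 2 / 8 := by linarith [q1, q2]
  have c9 : 1 + C3 + C3 * C0 ≤ C0 ^ 2 / 512 - C0 ^ 2 / 1000 := by
    linarith [q1, q2]
  -- memberships in [-1,1]
  have hy10I : y10 ∈ Set.Icc (-1:ℝ) 1 := hI1 hy10
  have hy1I : z1.2 ∈ Set.Icc (-1:ℝ) 1 := by
    refine hI1 ⟨by linarith [hy10.1], ?_⟩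
    have : z1.2 < y10 + ρ * min 1 δ := by linarith
    linarith
  have hy20I : (j2:ℝ) * ρ ∈ Set.Icc (-1:ℝ) 1 := hI2 ⟨le_refl _, by linarith⟩
  have hy2I : z2.2 ∈ Set.Icc (-1:ℝ) 1 := hI2 ⟨by linarith, by linarith⟩
  -- distances
  have hjd := abs_le.1 hj2.le
  have hd1 : ((j2:ℝ) - j1) * ρ ≤ C0 / 2 * ρ := mul_le_mul_of_nonneg_right hjd.2 hρ0.le
  have hd2 : -(C0 / 2) * ρ ≤ ((j2:ℝ) - j1) * ρ := mul_le_mul_of_nonneg_right hjd.1 hρ0.le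
  have hco2 : 0 ≤ (C0 - 2) * ρ := mul_nonneg (by linarith) hρ0.le
  have hMρ : ρ * min 1 δ ≤ ρ := mul_le_of_le_one_right hρ0.le hM1
  have hy21 : |z2.2 - z1.2| ≤ C0 * ρ := by
    rw [abs_le]
    constructor <;> linarith [hy10.1, hy10.2]
  have hy2010 : |(j2:ℝ) * ρ - y10| ≤ C0 * ρ := by
    rw [abs_le]
    constructor <;> linarith [hy10.1, hy10.2]
  have hy1d : |z1.2 - y10| ≤ ρ * min 1 δ := by rw [abs_of_nonneg hz1a]; linarith
  have hy2d : |z2.2 - (j2:ℝ) * ρ| ≤ ρ := by rw [abs_of_nonneg hz2a]; linarith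
  have hdd : |(z2.2 - (j2:ℝ) * ρ) - (z1.2 - y10)| ≤ ρ := by
    rw [abs_le]; constructor <;> linarith
  -- Lipschitz / Taylor estimates
  have lip := lipH hC3 hh h3
  have tay := taylorH hC3 hh h3
  have L1 : |iteratedDeriv 2 h z1.2 - iteratedDeriv 2 h y10| ≤ C3 * (ρ * min 1 δ) :=
    (lip y10 hy10I z1.2 hy1I).trans (mul_le_mul_of_nonneg_left hy1d hC3.le)
  have L2 : |iteratedDeriv 2 h z2.2 - iteratedDeriv 2 h ((j2:ℝ) * ρ)| ≤ C3 * ρ :=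
    (lip ((j2:ℝ)*ρ) hy20I z2.2 hy2I).trans (mul_le_mul_of_nonneg_left hy2d hC3.le)
  have L3 : |iteratedDeriv 2 h ((j2:ℝ) * ρ) - iteratedDeriv 2 h y10| ≤ C3 * (C0 * ρ) :=
    (lip y10 hy10I ((j2:ℝ)*ρ) hy20I).trans (mul_le_mul_of_nonneg_left hy2010 hC3.le)
  have hsq : (z1.2 - y10)^2 ≤ ρ^2 * min 1 δ := by
    have e1 : (z1.2 - y10)^2 ≤ (ρ * min 1 δ)^2 := pow_le_pow_left₀ hz1a (by linarith) 2
    have e2 : (min 1 δ)^2 ≤ min 1 δ := by rw [sq]; exact mul_le_of_le_one_left hM0.le hM1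
    have e3 : ρ^2 * (min 1 δ)^2 ≤ ρ^2 * min 1 δ := mul_le_mul_of_nonneg_left e2 (sq_nonneg ρ)
    calc (z1.2 - y10)^2 ≤ (ρ * min 1 δ)^2 := e1
      _ = ρ^2 * (min 1 δ)^2 := by ring
      _ ≤ ρ^2 * min 1 δ := e3
  have R1b : |deriv h y10 - deriv h z1.2 + iteratedDeriv 2 h y10 * (z1.2 - y10)| ≤
      C3 * (ρ^2 * min 1 δ) := by
    have := tay y10 hy10I z1.2 hy1I
    rw [show deriv h y10 - deriv h z1.2 + iteratedDeriv 2 h y10 * (z1.2 - y10) =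
      -(deriv h z1.2 - deriv h y10 - iteratedDeriv 2 h y10 * (z1.2 - y10)) by ring, abs_neg]
    exact this.trans (mul_le_mul_of_nonneg_left hsq hC3.le)
  -- bounds transported to the scale parameters
  have hRδ : C3 * (ρ^2 * min 1 δ) ≤ C3 * (ρ^2 * δ) :=
    mul_le_mul_of_nonneg_left (mul_le_mul_of_nonneg_left hMδ (sq_nonneg ρ)) hC3.le
  have hR1' : C3 * (ρ^2 * min 1 δ) ≤ C3 * ρ^2 := by
    have : ρ^2 * min 1 δ ≤ ρ^2 := by
      have := mul_le_mul_of_nonneg_left hM1 (sq_nonneg ρ); linarith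
    exact mul_le_mul_of_nonneg_left this hC3.le
  have habs2 : |(z2.1 - t20 + ε * (deriv h z2.2 - deriv h y10 -
      iteratedDeriv 2 h y10 / 2 * (z2.2 - y10))) -
      (z1.1 - x10 + ε * (iteratedDeriv 2 h y10 / 2) * (z1.2 - y10))| ≤ ε * ρ ^ 2 * δ := by
    rw [abs_le]; constructor <;> linarith
  -- ############ Part 1 : τ_{z1} ############
  have key1 : τ z1 z1 z2 - (t20 - x10) =
      ((z2.1 - t20 + ε * (deriv h z2.2 - deriv h y10 -
          iteratedDeriv 2 h y10 / 2 * (z2.2 - y10))) -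
        (z1.1 - x10 + ε * (iteratedDeriv 2 h y10 / 2) * (z1.2 - y10)))
      + ε * (deriv h y10 - deriv h z1.2 + iteratedDeriv 2 h y10 * (z1.2 - y10))
      + (-(ε * ((iteratedDeriv 2 h z1.2 - iteratedDeriv 2 h y10) * (z2.2 - z1.2)) / 2)) := by
    simp only [τ]; ring
  have hB2 : |ε * (deriv h y10 - deriv h z1.2 + iteratedDeriv 2 h y10 * (z1.2 - y10))| ≤
      ε * (C3 * (ρ^2 * min 1 δ)) := by
    rw [abs_mul, abs_of_nonneg hε.le]
    exact mul_le_mul_of_nonneg_left R1b hε.le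
  have hB3 : |(-(ε * ((iteratedDeriv 2 h z1.2 - iteratedDeriv 2 h y10) * (z2.2 - z1.2)) / 2))| ≤
      ε * (C3 * (ρ * min 1 δ) * (C0 * ρ)) / 2 := by
    rw [abs_neg, abs_div, abs_mul, abs_mul, abs_of_nonneg hε.le]
    have hm : |iteratedDeriv 2 h z1.2 - iteratedDeriv 2 h y10| * |z2.2 - z1.2| ≤
        C3 * (ρ * min 1 δ) * (C0 * ρ) :=
      mul_le_mul L1 hy21 (abs_nonneg _) (by positivity)
    have := mul_le_mul_of_nonneg_left hm hε.le
    rw [show |(2:ℝ)| = 2 by norm_num]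
    linarith
  have hE1 : |τ z1 z1 z2 - (t20 - x10)| ≤ C0 ^ 2 / 8 * (ε * ρ ^ 2 * δ) := by
    have tri := abs_add_three
      ((z2.1 - t20 + ε * (deriv h z2.2 - deriv h y10 -
          iteratedDeriv 2 h y10 / 2 * (z2.2 - y10))) -
        (z1.1 - x10 + ε * (iteratedDeriv 2 h y10 / 2) * (z1.2 - y10)))
      (ε * (deriv h y10 - deriv h z1.2 + iteratedDeriv 2 h y10 * (z1.2 - y10)))
      (-(ε * ((iteratedDeriv 2 h z1.2 - iteratedDeriv 2 h y10) * (z2.2 - z1.2)) / 2))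
    rw [← key1] at tri
    -- convert the three bounds into polynomial form
    have p2 : ε * (C3 * (ρ^2 * min 1 δ)) ≤ C3 * (ε * ρ ^ 2 * δ) := by
      have := mul_le_mul_of_nonneg_left hRδ hε.le; linarith [this]
    have p3 : ε * (C3 * (ρ * min 1 δ) * (C0 * ρ)) / 2 ≤ C3 * C0 / 2 * (ε * ρ ^ 2 * δ) := by
      have hmm := mul_le_mul_of_nonneg_left hMδ
        (show (0:ℝ) ≤ ε * C3 * C0 * ρ ^ 2 / 2 by positivity)
      linarith [hmm]
    have pc := mul_le_mul_of_nonneg_right c8 hX0.le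
    linarith [tri, habs2, hB2, hB3, p2, p3, pc]
  have habsT1 : |t20 - x10| - |τ z1 z1 z2| ≤ |τ z1 z1 z2 - (t20 - x10)| := by
    have := abs_sub_abs_le_abs_sub (t20 - x10) (τ z1 z1 z2)
    rw [abs_sub_comm (t20 - x10) (τ z1 z1 z2)] at this
    exact this
  have habsT2 := abs_sub_abs_le_abs_sub (τ z1 z1 z2) (t20 - x10)
  -- ############ Part 2 : τ_{z2} ############
  have key2 : τ z2 z1 z2 -
      (t20 - ε * (deriv h ((j2:ℝ) * ρ) - deriv h y10 -
          iteratedDeriv 2 h y10 / 2 * ((j2:ℝ) * ρ - y10)) - x10 +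
        ε * (deriv h ((j2:ℝ) * ρ) - deriv h y10 -
          1 / 2 * iteratedDeriv 2 h ((j2:ℝ) * ρ) * ((j2:ℝ) * ρ - y10))) =
      ((z2.1 - t20 + ε * (deriv h z2.2 - deriv h y10 -
          iteratedDeriv 2 h y10 / 2 * (z2.2 - y10))) -
        (z1.1 - x10 + ε * (iteratedDeriv 2 h y10 / 2) * (z1.2 - y10)))
      + ε * (deriv h y10 - deriv h z1.2 + iteratedDeriv 2 h y10 * (z1.2 - y10))
      + (-(ε * ((iteratedDeriv 2 h z2.2 - iteratedDeriv 2 h ((j2:ℝ) * ρ)) * (z2.2 - z1.2)) / 2))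
      + (-(ε * ((iteratedDeriv 2 h ((j2:ℝ) * ρ) - iteratedDeriv 2 h y10) *
          ((z2.2 - (j2:ℝ) * ρ) - (z1.2 - y10))) / 2)) := by
    simp only [τ]; ring
  have hB3' : |(-(ε * ((iteratedDeriv 2 h z2.2 - iteratedDeriv 2 h ((j2:ℝ) * ρ)) *
      (z2.2 - z1.2)) / 2))| ≤ ε * (C3 * ρ * (C0 * ρ)) / 2 := by
    rw [abs_neg, abs_div, abs_mul, abs_mul, abs_of_nonneg hε.le]
    have hm : |iteratedDeriv 2 h z2.2 - iteratedDeriv 2 h ((j2:ℝ) * ρ)| * |z2.2 - z1.2| ≤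
        C3 * ρ * (C0 * ρ) := mul_le_mul L2 hy21 (abs_nonneg _) (by positivity)
    have := mul_le_mul_of_nonneg_left hm hε.le
    rw [show |(2:ℝ)| = 2 by norm_num]
    linarith
  have hB4' : |(-(ε * ((iteratedDeriv 2 h ((j2:ℝ) * ρ) - iteratedDeriv 2 h y10) *
      ((z2.2 - (j2:ℝ) * ρ) - (z1.2 - y10))) / 2))| ≤ ε * (C3 * (C0 * ρ) * ρ) / 2 := by
    rw [abs_neg, abs_div, abs_mul, abs_mul, abs_of_nonneg hε.le]
    have hm : |iteratedDeriv 2 h ((j2:ℝ) * ρ) - iteratedDeriv 2 h y10| *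
        |(z2.2 - (j2:ℝ) * ρ) - (z1.2 - y10)| ≤ C3 * (C0 * ρ) * ρ :=
      mul_le_mul L3 hdd (abs_nonneg _) (by positivity)
    have := mul_le_mul_of_nonneg_left hm hε.le
    rw [show |(2:ℝ)| = 2 by norm_num]
    linarith
  have hE2 : |τ z2 z1 z2 -
      (t20 - ε * (deriv h ((j2:ℝ) * ρ) - deriv h y10 -
          iteratedDeriv 2 h y10 / 2 * ((j2:ℝ) * ρ - y10)) - x10 +
        ε * (deriv h ((j2:ℝ) * ρ) - deriv h y10 -
          1 / 2 * iteratedDeriv 2 h ((j2:ℝ) * ρ) * ((j2:ℝ) * ρ - y10)))| ≤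
      (C0 ^ 2 / 512 - C0 ^ 2 / 1000) * (ε * ρ ^ 2 * max 1 δ) := by
    have tri1 := abs_add_le
      (((z2.1 - t20 + ε * (deriv h z2.2 - deriv h y10 -
          iteratedDeriv 2 h y10 / 2 * (z2.2 - y10))) -
        (z1.1 - x10 + ε * (iteratedDeriv 2 h y10 / 2) * (z1.2 - y10)))
      + ε * (deriv h y10 - deriv h z1.2 + iteratedDeriv 2 h y10 * (z1.2 - y10))
      + (-(ε * ((iteratedDeriv 2 h z2.2 - iteratedDeriv 2 h ((j2:ℝ) * ρ)) *
          (z2.2 - z1.2)) / 2)))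
      (-(ε * ((iteratedDeriv 2 h ((j2:ℝ) * ρ) - iteratedDeriv 2 h y10) *
          ((z2.2 - (j2:ℝ) * ρ) - (z1.2 - y10))) / 2))
    have tri2 := abs_add_three
      ((z2.1 - t20 + ε * (deriv h z2.2 - deriv h y10 -
          iteratedDeriv 2 h y10 / 2 * (z2.2 - y10))) -
        (z1.1 - x10 + ε * (iteratedDeriv 2 h y10 / 2) * (z1.2 - y10)))
      (ε * (deriv h y10 - deriv h z1.2 + iteratedDeriv 2 h y10 * (z1.2 - y10)))
      (-(ε * ((iteratedDeriv 2 h z2.2 - iteratedDeriv 2 h ((j2:ℝ) * ρ)) * (z2.2 - z1.2)) / 2))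
    rw [← key2] at tri1
    have p2 : ε * (C3 * (ρ^2 * min 1 δ)) ≤ C3 * (ε * ρ ^ 2 * max 1 δ) := by
      have e1 := mul_le_mul_of_nonneg_left hR1' hε.le
      have e2 := mul_le_mul_of_nonneg_left hρ2Y hC3.le
      linarith [e1, e2]
    have p3 : ε * (C3 * ρ * (C0 * ρ)) / 2 ≤ C3 * C0 / 2 * (ε * ρ ^ 2 * max 1 δ) := by
      have := mul_le_mul_of_nonneg_left hρ2Y (show (0:ℝ) ≤ C3 * C0 / 2 by positivity)
      linarith [this]
    have p4 : ε * (C3 * (C0 * ρ) * ρ) / 2 ≤ C3 * C0 / 2 * (ε * ρ ^ 2 * max 1 δ) := by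
      have := mul_le_mul_of_nonneg_left hρ2Y (show (0:ℝ) ≤ C3 * C0 / 2 by positivity)
      linarith [this]
    have p1 : ε * ρ ^ 2 * δ ≤ 1 * (ε * ρ ^ 2 * max 1 δ) := by linarith
    have pc := mul_le_mul_of_nonneg_right c9 hY0.le
    linarith [tri1, tri2, habs2, hB2, hB3', hB4', p1, p2, p3, p4, pc]
  have habsS1 := abs_sub_abs_le_abs_sub
      (t20 - ε * (deriv h ((j2:ℝ) * ρ) - deriv h y10 -
          iteratedDeriv 2 h y10 / 2 * ((j2:ℝ) * ρ - y10)) - x10 +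
        ε * (deriv h ((j2:ℝ) * ρ) - deriv h y10 -
          1 / 2 * iteratedDeriv 2 h ((j2:ℝ) * ρ) * ((j2:ℝ) * ρ - y10)))
      (τ z2 z1 z2)
  rw [abs_sub_comm
      (t20 - ε * (deriv h ((j2:ℝ) * ρ) - deriv h y10 -
          iteratedDeriv 2 h y10 / 2 * ((j2:ℝ) * ρ - y10)) - x10 +
        ε * (deriv h ((j2:ℝ) * ρ) - deriv h y10 -
          1 / 2 * iteratedDeriv 2 h ((j2:ℝ) * ρ) * ((j2:ℝ) * ρ - y10)))
      (τ z2 z1 z2)] at habsS1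
  have habsS2 := abs_sub_abs_le_abs_sub (τ z2 z1 z2)
      (t20 - ε * (deriv h ((j2:ℝ) * ρ) - deriv h y10 -
          iteratedDeriv 2 h y10 / 2 * ((j2:ℝ) * ρ - y10)) - x10 +
        ε * (deriv h ((j2:ℝ) * ρ) - deriv h y10 -
          1 / 2 * iteratedDeriv 2 h ((j2:ℝ) * ρ) * ((j2:ℝ) * ρ - y10)))
  have hsqC0 := sq_nonneg C0
  refine ⟨⟨?_, ?_⟩, ⟨?_, ?_⟩⟩
  · -- lower bound for τ_{z1}
    linarith [hE1, h14a, habsT1]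
  · -- upper bound for τ_{z1}
    linarith [hE1, h14b.le, habsT2, mul_nonneg hsqC0 hX0.le]
  · -- lower bound for τ_{z2}
    linarith [hE2, h15a, habsS1]
  · -- upper bound for τ_{z2}
    linarith [hE2, h15b.le, habsS2, mul_nonneg hsqC0 hY0.le]
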